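/- Let G be a finite group and let G^op denote its opposite group, so that the product in G × G^op is (g₁, g₂)(h₁, h₂) = (g₁h₁, h₂g₂). Define the ℂ-linear map Φ : ℂ[G] → ℂ[G × G^op] by Φ(g) = (1/|G|) Σ_{(g₁, g₂) ∈ G × G, g₁g₂ = g} (g₁, g₂). Then the restriction of Φ to the center Z(ℂ[G]) of the group algebra is an injective multiplicative map: Φ(x · y) = Φ(x) · Φ(y) for all x, y ∈ Z(ℂ[G]). In particular, if C_λ denotes the sum of the elements of a conjugacy class λ of G and C_λ · C_μ = Σ_ν a_{λμ}^ν C_ν in Z(ℂ[G]), then Φ(C_λ) · Φ(C_μ) = Σ_ν a_{λμ}^ν Φ(C_ν) in ℂ[G × G^op]. -/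

import Mathlib

/-- The ℂ-linear map `Φ : ℂ[G] → ℂ[G × Gᵒᵖ]` with
`Φ(g) = (1/|G|) ∑_{g₁ g₂ = g} (g₁, g₂)`. -/
noncomputable def Phi (G : Type*) [Group G] [Fintype G] (x : MonoidAlgebra ℂ G) :
    MonoidAlgebra ℂ (G × Gᵐᵒᵖ) :=
  Finsupp.sum x.coeff fun g c =>
    (Fintype.card G : ℂ)⁻¹ •
      ∑ g₁ : G, MonoidAlgebra.single (g₁, MulOpposite.op (g₁⁻¹ * g)) c

open MulOpposite Finsupp MonoidAlgebra

noncomputable instance mulOppositeFintype {α : Type*} [Fintype α] : Fintype αᵐᵒᵖ :=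
  Fintype.ofEquiv α MulOpposite.opEquiv

/-- Convolution formula for the product in a group algebra over a finite group. -/
lemma conv_apply {H : Type*} [Group H] [Fintype H] (f g : MonoidAlgebra ℂ H) (k : H) :
    (f * g).coeff k = ∑ t : H, f.coeff t * g.coeff (t⁻¹ * k) := by
  classical
  rw [MonoidAlgebra.coeff_mul_apply_left, Finsupp.sum_fintype]
  intro a; simp

/-- The coefficient of `Φ(x)` at `(a, op b)` is `|G|⁻¹ x(ab)`. -/
lemma Phi_apply {G : Type*} [Group G] [Fintype G] (x : MonoidAlgebra ℂ G) (a b : G) :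
    (Phi G x).coeff (a, op b) = (Fintype.card G : ℂ)⁻¹ * x.coeff (a * b) := by
  classical
  unfold Phi
  rw [MonoidAlgebra.coeff_finsuppSum, Finsupp.sum_apply, Finsupp.sum_fintype]
  · have hg : ∀ g : G,
        (((Fintype.card G : ℂ)⁻¹ •
          ∑ g₁ : G, MonoidAlgebra.single (g₁, op (g₁⁻¹ * g)) (x.coeff g) :
            MonoidAlgebra ℂ (G × Gᵐᵒᵖ))).coeff (a, op b)
        = (Fintype.card G : ℂ)⁻¹ * (if g = a * b then x.coeff g else 0) := by
      intro g
      rw [MonoidAlgebra.coeff_smul, Finsupp.smul_apply, MonoidAlgebra.coeff_sum,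
        Finset.sum_apply', smul_eq_mul]
      congr 1
      have h1 : ∀ g₁ : G,
          (MonoidAlgebra.single (g₁, op (g₁⁻¹ * g)) (x.coeff g) : MonoidAlgebra ℂ (G × Gᵐᵒᵖ)).coeff
            (a, op b)
          = if g₁ = a then (if g = a * b then x.coeff g else 0) else 0 := by
        intro g₁
        rw [MonoidAlgebra.coeff_single, Finsupp.single_apply]
        have hcond : ((g₁, op (g₁⁻¹ * g)) = (a, op b)) ↔ (g₁ = a ∧ g = a * b) := by
          rw [Prod.ext_iff]
          simp only [op_inj]
          constructor
          · rintro ⟨h1, h2⟩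
            subst h1
            exact ⟨rfl, by rw [← h2]; group⟩
          · rintro ⟨h1, h2⟩
            subst h1; subst h2
            exact ⟨rfl, by group⟩
        rw [if_congr hcond rfl rfl, ite_and]
      simp only [h1]
      rw [Finset.sum_ite_eq' Finset.univ a fun _ => if g = a * b then x.coeff g else 0]
      simp
    simp only [hg]
    rw [← Finset.mul_sum, Finset.sum_ite_eq' Finset.univ (a * b) fun g => x.coeff g]
    simp
  · intro g
    simp

lemma Phi_apply' {G : Type*} [Group G] [Fintype G] (x : MonoidAlgebra ℂ G)
    (p : G × Gᵐᵒᵖ) : (Phi G x).coeff p = (Fintype.card G : ℂ)⁻¹ * x.coeff (p.1 * p.2.unop) := by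
  obtain ⟨a, b⟩ := p
  rw [← op_unop b, Phi_apply]
  simp

/-- Coefficients of a central element are conjugation-invariant. -/
lemma central_conj {G : Type*} [Group G] [Fintype G] {y : MonoidAlgebra ℂ G}
    (hy : y ∈ Subalgebra.center ℂ (MonoidAlgebra ℂ G)) (w k : G) :
    y.coeff (w⁻¹ * k * w) = y.coeff k := by
  have h := Subalgebra.mem_center_iff.mp hy (MonoidAlgebra.single w 1)
  have h2 : ((MonoidAlgebra.single w 1 * y : MonoidAlgebra ℂ G)).coeff (k * w)
      = ((y * MonoidAlgebra.single w 1 : MonoidAlgebra ℂ G)).coeff (k * w) := by rw [h]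
  simp only [MonoidAlgebra.coeff_single_mul_apply, MonoidAlgebra.coeff_mul_single_apply, one_mul,
    mul_one] at h2
  rw [show w⁻¹ * k * w = w⁻¹ * (k * w) by group, h2]
  congr 1
  group

/-- `Φ` is ℂ-linear, and its restriction to the center of `ℂ[G]` is injective and
multiplicative. -/
theorem statement17 (G : Type*) [Group G] [Fintype G] :
    (∀ x y : MonoidAlgebra ℂ G, Phi G (x + y) = Phi G x + Phi G y) ∧
    (∀ (c : ℂ) (x : MonoidAlgebra ℂ G), Phi G (c • x) = c • Phi G x) ∧
    (∀ x ∈ Subalgebra.center ℂ (MonoidAlgebra ℂ G),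
      ∀ y ∈ Subalgebra.center ℂ (MonoidAlgebra ℂ G),
        Phi G (x * y) = Phi G x * Phi G y) ∧
    Set.InjOn (Phi G)
      (Subalgebra.center ℂ (MonoidAlgebra ℂ G) : Set (MonoidAlgebra ℂ G)) := by
  classical
  have hN : (Fintype.card G : ℂ) ≠ 0 := by
    exact_mod_cast Fintype.card_ne_zero
  refine ⟨?_, ?_, ?_, ?_⟩
  · -- additivity
    intro x y
    ext p
    have h1 : (Phi G x + Phi G y).coeff p = (Phi G x).coeff p + (Phi G y).coeff p := rfl
    have h2 : (x + y).coeff (p.1 * p.2.unop) = x.coeff (p.1 * p.2.unop) + y.coeff (p.1 * p.2.unop) := rfl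
    rw [Phi_apply', h1, h2, Phi_apply', Phi_apply']
    ring
  · -- homogeneity
    intro c x
    ext p
    have h1 : (c • Phi G x).coeff p = c * (Phi G x).coeff p := rfl
    have h2 : (c • x).coeff (p.1 * p.2.unop) = c * x.coeff (p.1 * p.2.unop) := rfl
    rw [Phi_apply', h1, h2, Phi_apply']
    ring
  · -- multiplicativity on the center
    intro x hx y hy
    ext p
    obtain ⟨a, b'⟩ := p
    set b := b'.unop with hb
    rw [Phi_apply', conv_apply x y, conv_apply (Phi G x) (Phi G y), Fintype.sum_prod_type]
    have hreindex : ∀ c : G,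
        (∑ d' : Gᵐᵒᵖ, (Phi G x).coeff (c, d') * (Phi G y).coeff ((c, d')⁻¹ * (a, b')))
        = ∑ d : G, (Phi G x).coeff (c, op d) * (Phi G y).coeff ((c, op d)⁻¹ * (a, b')) :=
      fun c => (Fintype.sum_equiv (opEquiv) _ _ (fun d => by simp)).symm
    simp only [hreindex]
    have hterm : ∀ c d : G,
        (Phi G x).coeff (c, op d) * (Phi G y).coeff ((c, op d)⁻¹ * (a, b'))
        = (Fintype.card G : ℂ)⁻¹ * x.coeff (c * d) *
          ((Fintype.card G : ℂ)⁻¹ * y.coeff ((c⁻¹ * a) * (b * d⁻¹))) := by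
      intro c d
      rw [show ((c, op d)⁻¹ * (a, b') : G × Gᵐᵒᵖ) = (c⁻¹ * a, op (b * d⁻¹)) by
        simp [Prod.ext_iff, hb, ← MulOpposite.op_inv]]
      rw [Phi_apply, Phi_apply]
    simp only [hterm]
    have hinner : ∀ c : G,
        (∑ d : G, (Fintype.card G : ℂ)⁻¹ * x.coeff (c * d) *
          ((Fintype.card G : ℂ)⁻¹ * y.coeff ((c⁻¹ * a) * (b * d⁻¹))))
        = (Fintype.card G : ℂ)⁻¹ * ((Fintype.card G : ℂ)⁻¹ *
            ∑ t : G, x.coeff t * y.coeff (t⁻¹ * (a * b))) := by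
      intro c
      rw [Finset.mul_sum, Finset.mul_sum]
      refine (Fintype.sum_equiv (Equiv.mulLeft c⁻¹) _ _ ?_).symm
      intro t
      simp only [Equiv.coe_mulLeft]
      have hy1 : y.coeff ((c⁻¹ * a) * (b * (c⁻¹ * t)⁻¹)) = y.coeff (t⁻¹ * (a * b)) := by
        have e1 : (c⁻¹ * a) * (b * (c⁻¹ * t)⁻¹) = c⁻¹ * (a * b * t⁻¹) * c := by group
        have e2 : t⁻¹ * (a * b * t⁻¹) * t = t⁻¹ * (a * b) := by group
        rw [e1, central_conj hy, ← e2, central_conj hy]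
      rw [hy1, show c * (c⁻¹ * t) = t by group]
      ring
    simp only [hinner]
    rw [Finset.sum_const, Finset.card_univ, nsmul_eq_mul]
    field_simp
    ring
  · -- injectivity on the center
    intro x hx y hy h
    ext g
    have h0 : (Phi G x).coeff (g, op (1 : G)) = (Phi G y).coeff (g, op (1 : G)) := by rw [h]
    rw [Phi_apply, Phi_apply, mul_one] at h0
    exact mul_left_cancel₀ (inv_ne_zero hN) h0
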